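/- Let n ∈ ℕ with n ≥ 2, let p ∈ (0,2] and let λ > (n+p-2)/n. Then there exist x ∈ ℝⁿ with |x| = 1 and a ∈ (0,∞) such that ∫_{S^{n-1}} |x - a z|^p dσ(z) < (|x|² + λ a²)^{p/2}; that is, (n+p-2)/n is the largest constant λ for which the inequality ∫_{S^{n-1}} |x - a z|^p dσ(z) ≥ (|x|² + λ a²)^{p/2} holds for all x ∈ ℝⁿ and a ≥ 0. -/

import Mathlib

open MeasureTheory Metric
open scoped ENNReal RealInnerProductSpace
open Real Set


lemma strong_concave {q a : ℝ} (hq0 : 0 < q) (hq1 : q ≤ 1) (ha0 : 0 < a) (ha1 : a < 1)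
    {t : ℝ} (ht : t ∈ Set.Icc (-1:ℝ) 1) :
    (1 + a^2 - 2*a*t) ^ q ≤ (1+a^2)^q - (q*(1+a^2)^(q-1)*(2*a))*t
      - (q*(1-q)*((1+a)^2)^(q-2)*(2*a)^2/2)*t^2 := by
  set c : ℝ := 1 + a^2 with hc
  set B : ℝ := 2*a with hB
  set M : ℝ := (1+a)^2 with hM
  set K : ℝ := q*(1-q)*M^(q-2)*B^2 with hK
  have hcpos : (0:ℝ) < c := by positivity
  have hBpos : (0:ℝ) < B := by positivity
  have hpos : ∀ s ∈ Set.Icc (-1:ℝ) 1, 0 < c - B*s := by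
    intro s hs
    have h1 : B*s ≤ B*1 := by nlinarith [hs.2]
    nlinarith [hs.2, sq_nonneg (1-a)]
  have hle : ∀ s ∈ Set.Icc (-1:ℝ) 1, c - B*s ≤ M := by
    intro s hs; nlinarith [hs.1]
  set g : ℝ → ℝ := fun t => c^q - q*c^(q-1)*B*t - K/2*t^2 - (c - B*t)^q with hg
  set g' : ℝ → ℝ := fun s => -(q*c^(q-1)*B) - K*s + B * q * (c - B*s)^(q-1) with hg'
  have hderiv : ∀ s ∈ Set.Icc (-1:ℝ) 1, HasDerivAt g (g' s) s := by
    intro s hs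
    have h1 : HasDerivAt (fun u : ℝ => c - B*u) (-B) s := by
      simpa using ((hasDerivAt_id s).const_mul B).const_sub c
    have h2 := h1.rpow_const (p := q) (Or.inl (hpos s hs).ne')
    have h3 : HasDerivAt (fun u : ℝ => c^q - q*c^(q-1)*B*u - K/2*u^2)
        (-(q*c^(q-1)*B) - K*s) s := by
      have := (((hasDerivAt_id s).const_mul (q*c^(q-1)*B)).const_sub (c^q)).sub
        (((hasDerivAt_pow 2 s)).const_mul (K/2))
      refine this.congr_deriv ?_
      all_goals ring
    have := h3.sub h2
    refine this.congr_deriv ?_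
    ring
  have hderiv2 : ∀ s ∈ Set.Icc (-1:ℝ) 1,
      HasDerivAt g' (-K + B * q * ((q-1) * (c - B*s)^(q-2)) * (-B)) s := by
    intro s hs
    have h1 : HasDerivAt (fun u : ℝ => c - B*u) (-B) s := by
      simpa using ((hasDerivAt_id s).const_mul B).const_sub c
    have h2 := h1.rpow_const (p := q-1) (Or.inl (hpos s hs).ne')
    have h3 := (h2.const_mul (B*q)).const_add (-(q*c^(q-1)*B))
    have h4 : HasDerivAt (fun u : ℝ => -(q*c^(q-1)*B) - K*u) (-K) s := by
      simpa using ((hasDerivAt_id s).const_mul K).const_sub (-(q*c^(q-1)*B))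
    have := h4.add (h2.const_mul (B*q))
    refine this.congr_deriv ?_
    rw [show q - 1 - 1 = q - 2 by ring]; ring
  have hK0 : 0 ≤ K := by
    have : (0:ℝ) ≤ M^(q-2) := rpow_nonneg (by positivity) _
    have h1q : 0 ≤ 1 - q := by linarith
    positivity
  have hg''nonneg : ∀ s ∈ Set.Icc (-1:ℝ) 1,
      0 ≤ -K + B * q * ((q-1) * (c - B*s)^(q-2)) * (-B) := by
    intro s hs
    have h1 : M^(q-2) ≤ (c - B*s)^(q-2) :=
      rpow_le_rpow_of_nonpos (hpos s hs) (hle s hs) (by linarith)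
    have hcoef : (0:ℝ) ≤ q*(1-q)*B^2 :=
      mul_nonneg (mul_nonneg hq0.le (by linarith)) (sq_nonneg B)
    have h2 : K ≤ q*(1-q)*B^2*(c - B*s)^(q-2) := by
      rw [hK]
      nlinarith [mul_le_mul_of_nonneg_left h1 hcoef]
    nlinarith [h2]
  have hg'mono : MonotoneOn g' (Set.Icc (-1:ℝ) 1) := by
    apply monotoneOn_of_deriv_nonneg (convex_Icc _ _)
    · exact fun s hs => (hderiv2 s hs).continuousAt.continuousWithinAt
    · intro s hs
      rw [interior_Icc] at hs
      exact (hderiv2 s (Ioo_subset_Icc_self hs)).differentiableAt.differentiableWithinAt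
    · intro s hs
      rw [interior_Icc] at hs
      rw [(hderiv2 s (Ioo_subset_Icc_self hs)).deriv]
      exact hg''nonneg s (Ioo_subset_Icc_self hs)
  have hg'0 : g' 0 = 0 := by simp [hg']; ring
  have hg0 : g 0 = 0 := by simp [hg]
  have key : 0 ≤ g t := by
    rcases le_total 0 t with h0t | ht0
    · have hmono : MonotoneOn g (Set.Icc (0:ℝ) 1) := by
        apply monotoneOn_of_deriv_nonneg (convex_Icc _ _)
        · intro s hs
          exact (hderiv s ⟨by linarith [hs.1], hs.2⟩).continuousAt.continuousWithinAt
        · intro s hs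
          rw [interior_Icc] at hs
          exact (hderiv s ⟨by linarith [hs.1], hs.2.le⟩).differentiableAt.differentiableWithinAt
        · intro s hs
          rw [interior_Icc] at hs
          rw [(hderiv s ⟨by linarith [hs.1], hs.2.le⟩).deriv]
          have := hg'mono (Set.mem_Icc.2 ⟨by norm_num, by norm_num⟩)
            (Set.mem_Icc.2 ⟨by linarith [hs.1], hs.2.le⟩) hs.1.le
          rw [hg'0] at this; exact this
      have := hmono (Set.mem_Icc.2 ⟨le_refl 0, by norm_num⟩) (Set.mem_Icc.2 ⟨h0t, ht.2⟩) h0t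
      rw [hg0] at this; exact this
    · have hanti : AntitoneOn g (Set.Icc (-1:ℝ) 0) := by
        apply antitoneOn_of_deriv_nonpos (convex_Icc _ _)
        · intro s hs
          exact (hderiv s ⟨hs.1, by linarith [hs.2]⟩).continuousAt.continuousWithinAt
        · intro s hs
          rw [interior_Icc] at hs
          exact (hderiv s ⟨hs.1.le, by linarith [hs.2]⟩).differentiableAt.differentiableWithinAt
        · intro s hs
          rw [interior_Icc] at hs
          rw [(hderiv s ⟨hs.1.le, by linarith [hs.2]⟩).deriv]
          have := hg'mono (Set.mem_Icc.2 ⟨hs.1.le, by linarith [hs.2]⟩)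
            (Set.mem_Icc.2 ⟨by norm_num, by norm_num⟩) hs.2.le
          rw [hg'0] at this; exact this
      have := hanti (Set.mem_Icc.2 ⟨ht.1, ht0⟩) (Set.mem_Icc.2 ⟨by norm_num, le_refl 0⟩) ht0
      rw [hg0] at this; exact this
  simp only [hg] at key
  nlinarith [key]


lemma bern {q u v : ℝ} (hq0 : 0 < q) (hq1 : q ≤ 1) (hu : 1 ≤ u) (huv : u ≤ v) :
    v ^ q - u ^ q ≤ q * (v - u) := by
  have hu0 : (0:ℝ) < u := by linarith
  have hv0 : (0:ℝ) ≤ v := by linarith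
  have young := Real.geom_mean_le_arith_mean2_weighted hq0.le
    (by linarith : (0:ℝ) ≤ 1 - q) (div_nonneg hv0 hu0.le) zero_le_one (by ring)
  rw [Real.one_rpow, mul_one] at young
  have young' : (v/u)^q ≤ q * (v/u) + (1-q) := by linarith
  have hdiv : (v/u)^q = v^q / u^q := Real.div_rpow hv0 hu0.le q
  have hA : (0:ℝ) < u ^ q := Real.rpow_pos_of_pos hu0 q
  have h2 : v^q ≤ (q * (v/u) + (1-q)) * u^q := by
    rw [hdiv] at young'
    calc v^q = (v^q/u^q) * u^q := by field_simp
    _ ≤ _ := mul_le_mul_of_nonneg_right young' hA.le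
  have hu1 : u^(q-1) = u^q / u := by
    rw [Real.rpow_sub hu0, Real.rpow_one]
  have hule : u^(q-1) ≤ 1 := Real.rpow_le_one_of_one_le_of_nonpos hu (by linarith)
  have h3 : (q * (v/u) + (1-q)) * u^q = u^q + (q * u^(q-1)) * (v - u) := by
    rw [hu1]; field_simp; ring
  rw [h3] at h2
  have h4 : (q * u^(q-1)) * (v-u) ≤ (q * 1) * (v-u) := by
    apply mul_le_mul_of_nonneg_right _ (by linarith)
    exact mul_le_mul_of_nonneg_left hule hq0.le
  nlinarith [h2, h4]

lemma arith_core (n : ℕ) (hn : 2 ≤ n) {q lam a : ℝ} (hq0 : 0 < q) (hq2 : q < 1)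
    (hlam0 : 0 ≤ lam) (hl1 : lam ≤ 1) (ha0 : 0 < a)
    (key : (n:ℝ)*(1-lam)*((1+a)^2)^2 < 2*(1-q)) :
    (1 + a^2)^q - (q*(1-q)*((1+a)^2)^(q-2)*(2*a)^2/2) * (1/n) < (1 + lam*a^2)^q := by
  have hn0 : (0:ℝ) < n := by positivity
  have hb2 : (0:ℝ) < ((1+a)^2)^2 := by positivity
  have hb1 : (1:ℝ) ≤ (1+a)^2 := by nlinarith
  have hXge : 1/((1+a)^2)^2 ≤ ((1+a)^2)^(q-2) := by
    have heq : ((1+a)^2:ℝ)^(q-2) * ((1+a)^2)^2 = ((1+a)^2)^q := by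
      rw [← Real.rpow_natCast ((1+a)^2) 2, ← Real.rpow_add (by positivity)]
      norm_num
    have hge1 : (1:ℝ) ≤ ((1+a)^2)^q := Real.one_le_rpow hb1 hq0.le
    rw [div_le_iff₀ hb2, heq]
    exact hge1
  have h5 : (1-lam) * ((n:ℝ)*((1+a)^2)^2) < 2*(1-q) := by nlinarith [key]
  have h6 : 1 - lam < 2*(1-q) / ((n:ℝ)*((1+a)^2)^2) := by
    rw [lt_div_iff₀ (by positivity)]; exact h5
  have hqa2 : (0:ℝ) < q*a^2 := by positivity
  have main : q*(1-lam)*a^2 < (q*(1-q)*((1+a)^2)^(q-2)*(2*a)^2/2) * (1/n) := by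
    calc q*(1-lam)*a^2 = (q*a^2)*(1-lam) := by ring
      _ < (q*a^2)*(2*(1-q)/((n:ℝ)*((1+a)^2)^2)) := mul_lt_mul_of_pos_left h6 hqa2
      _ = (2*q*(1-q)*a^2/n) * (1/((1+a)^2)^2) := by field_simp
      _ ≤ (2*q*(1-q)*a^2/n) * (((1+a)^2)^(q-2)) := by
          apply mul_le_mul_of_nonneg_left hXge
          have h1q : (0:ℝ) ≤ 1 - q := by linarith
          positivity
      _ = (q*(1-q)*((1+a)^2)^(q-2)*(2*a)^2/2) * (1/n) := by ring
  have hbern := bern hq0 hq2.le (show (1:ℝ) ≤ 1 + lam*a^2 by nlinarith)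
    (show (1:ℝ) + lam*a^2 ≤ 1 + a^2 by nlinarith)
  nlinarith [hbern, main]

lemma arith (n : ℕ) (hn : 2 ≤ n) {q lam : ℝ} (hq0 : 0 < q) (hq1 : q ≤ 1)
    (hlam0 : 0 ≤ lam) (hlam : (n : ℝ) * (1 - lam) < 2 * (1 - q)) :
    ∃ a : ℝ, 0 < a ∧ a < 1 ∧
      (1 + a^2)^q - (q*(1-q)*((1+a)^2)^(q-2)*(2*a)^2/2) * (1/n) < (1 + lam*a^2)^q := by
  have hn0 : (0:ℝ) < n := by positivity
  rcases le_or_gt lam 1 with hl1 | hl1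
  · have hq2 : q < 1 := by nlinarith
    have hδ : 0 < 2*(1-q) - (n:ℝ)*(1-lam) := by linarith
    obtain ⟨a, ha0, ha1, ha2⟩ : ∃ a : ℝ, 0 < a ∧ a ≤ 1/2 ∧
        a ≤ (2*(1-q) - (n:ℝ)*(1-lam))/31 :=
      ⟨min (1/2) ((2*(1-q) - (n:ℝ)*(1-lam))/31), lt_min (by norm_num) (by positivity),
        min_le_left _ _, min_le_right _ _⟩
    have hnl : (0:ℝ) ≤ (n:ℝ)*(1-lam) := mul_nonneg hn0.le (by linarith)
    have hnl2 : (n:ℝ)*(1-lam) < 2 := by nlinarith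
    have hpoly : (1+a)^4 ≤ 1 + 15*a := by
      nlinarith [mul_le_mul_of_nonneg_left ha1 ha0.le,
        mul_le_mul_of_nonneg_left ha1 (mul_nonneg ha0.le ha0.le),
        mul_le_mul_of_nonneg_left ha1 (mul_nonneg (mul_nonneg ha0.le ha0.le) ha0.le)]
    have key : (n:ℝ)*(1-lam)*((1+a)^2)^2 < 2*(1-q) := by
      have h15 : a * ((n:ℝ)*(1-lam)) ≤ ((2*(1-q) - (n:ℝ)*(1-lam))/31) * 2 :=
        mul_le_mul ha2 hnl2.le hnl (by positivity)
      nlinarith [mul_le_mul_of_nonneg_left hpoly hnl]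
    exact ⟨a, ha0, by linarith, arith_core n hn hq0 hq2 hlam0 hl1 ha0 key⟩
  · refine ⟨1/2, by norm_num, by norm_num, ?_⟩
    have hC : (0:ℝ) ≤ (q*(1-q)*(((1:ℝ)+1/2)^2)^(q-2)*(2*(1/2:ℝ))^2/2) * (1/n) := by
      have h1 : (0:ℝ) ≤ (((1:ℝ)+1/2)^2)^(q-2) := Real.rpow_nonneg (by norm_num) _
      have h2 : (0:ℝ) ≤ 1 - q := by linarith
      have h3 : (0:ℝ) ≤ 1/(n:ℝ) := by positivity
      nlinarith [mul_nonneg (mul_nonneg (mul_nonneg hq0.le h2) h1) h3]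
    have hlt : ((1:ℝ) + (1/2:ℝ)^2)^q < (1 + lam*(1/2:ℝ)^2)^q := by
      apply Real.rpow_lt_rpow (by norm_num) (by nlinarith) hq0
    linarith

/-- The normalized rotation-invariant (Haar) probability measure `σ` on the unit
sphere `S^{n-1} ⊆ ℝⁿ`. -/
noncomputable def sphereHaar (n : ℕ) :
    Measure (sphere (0 : EuclideanSpace ℝ (Fin n)) 1) :=
  ((volume : Measure (EuclideanSpace ℝ (Fin n))).toSphere Set.univ)⁻¹ •
    (volume : Measure (EuclideanSpace ℝ (Fin n))).toSphere

lemma sphereHaar_prob (n : ℕ) (hn : 1 ≤ n) : IsProbabilityMeasure (sphereHaar n) := by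
  have hdim : Module.finrank ℝ (EuclideanSpace ℝ (Fin n)) = n := finrank_euclideanSpace_fin
  have huniv : (volume : Measure (EuclideanSpace ℝ (Fin n))).toSphere Set.univ
      = (n : ℝ≥0∞) * volume (ball (0 : EuclideanSpace ℝ (Fin n)) 1) := by
    rw [Measure.toSphere_apply_univ, hdim]
  have h0 : (volume : Measure (EuclideanSpace ℝ (Fin n))).toSphere Set.univ ≠ 0 := by
    rw [huniv]
    exact mul_ne_zero (by exact_mod_cast Nat.one_le_iff_ne_zero.mp hn) (measure_ball_pos _ _ one_pos).ne'
  have htop : (volume : Measure (EuclideanSpace ℝ (Fin n))).toSphere Set.univ ≠ ⊤ := by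
    rw [huniv]
    exact ENNReal.mul_ne_top (ENNReal.natCast_ne_top n) measure_ball_lt_top.ne
  constructor
  rw [sphereHaar, Measure.smul_apply, smul_eq_mul, ENNReal.inv_mul_cancel h0 htop]

lemma integrable_sphereHaar {n : ℕ} (f : sphere (0 : EuclideanSpace ℝ (Fin n)) 1 → ℝ)
    (hf : Continuous f) [IsFiniteMeasure (sphereHaar n)] :
    Integrable f (sphereHaar n) :=
  hf.integrable_of_hasCompactSupport
    (IsCompact.of_isClosed_subset isCompact_univ (isClosed_tsupport f) (Set.subset_univ _))

open scoped RealInnerProductSpace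

lemma sum_inner_single_sq {n : ℕ} (w : EuclideanSpace ℝ (Fin n)) :
    ∑ i : Fin n, (⟪EuclideanSpace.single i (1:ℝ), w⟫) ^ 2 = ‖w‖ ^ 2 := by
  have h1 : ∀ i, ⟪EuclideanSpace.single i (1:ℝ), w⟫ = w i := fun i => by
    rw [EuclideanSpace.inner_single_left]; simp
  have h2 : ‖w‖^2 = ∑ i, ‖w i‖^2 := by
    rw [EuclideanSpace.norm_eq, Real.sq_sqrt (by positivity)]
  simp_rw [h1, h2]
  exact Finset.sum_congr rfl fun i _ => by rw [Real.norm_eq_abs, sq_abs]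

theorem stmt_1 (n : ℕ) (hn : 2 ≤ n) (p : ℝ) (hp : p ∈ Set.Ioc (0 : ℝ) 2) (lam : ℝ)
    (hlam : ((n : ℝ) + p - 2) / n < lam) :
    ∃ (x : EuclideanSpace ℝ (Fin n)) (a : ℝ), ‖x‖ = 1 ∧ 0 < a ∧
      ∫ z : sphere (0 : EuclideanSpace ℝ (Fin n)) 1,
          ‖x - a • (z : EuclideanSpace ℝ (Fin n))‖ ^ p ∂(sphereHaar n) <
        (‖x‖ ^ 2 + lam * a ^ 2) ^ (p / 2) := by
  obtain ⟨hp0, hp2⟩ := hp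
  have hn0 : (0:ℝ) < n := by exact_mod_cast (by omega : 0 < n)
  set q : ℝ := p/2 with hqdef
  have hq0 : 0 < q := by rw [hqdef]; linarith
  have hq1 : q ≤ 1 := by rw [hqdef]; linarith
  have hnR : (2:ℝ) ≤ (n:ℝ) := by exact_mod_cast hn
  have hlam0 : 0 ≤ lam := by
    have h1 : (0:ℝ) < ((n:ℝ) + p - 2)/n := div_pos (by linarith) hn0
    linarith
  have hlamq : (n:ℝ) * (1 - lam) < 2 * (1 - q) := by
    have h2 := (div_lt_iff₀ hn0).mp hlam
    rw [hqdef]; nlinarith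
  haveI : IsProbabilityMeasure (sphereHaar n) := sphereHaar_prob n (by omega)
  set σ := sphereHaar n with hσ
  have hnormz : ∀ z : sphere (0 : EuclideanSpace ℝ (Fin n)) 1,
      ‖(z : EuclideanSpace ℝ (Fin n))‖ = 1 := fun z => mem_sphere_zero_iff_norm.mp z.2
  have hTcont : ∀ (v : EuclideanSpace ℝ (Fin n)),
      Continuous (fun z : sphere (0 : EuclideanSpace ℝ (Fin n)) 1 =>
        (⟪v, (z : EuclideanSpace ℝ (Fin n))⟫ : ℝ)) :=
    fun v => continuous_const.inner continuous_subtype_val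
  -- sum of second moments equals 1
  have hsum : ∑ i : Fin n, ∫ z : sphere (0 : EuclideanSpace ℝ (Fin n)) 1,
      (⟪EuclideanSpace.single i (1:ℝ), (z : EuclideanSpace ℝ (Fin n))⟫)^2 ∂σ = 1 := by
    rw [← integral_finset_sum _ (fun i _ => integrable_sphereHaar (fun z : sphere (0 : EuclideanSpace ℝ (Fin n)) 1 => (⟪EuclideanSpace.single i (1:ℝ), (z : EuclideanSpace ℝ (Fin n))⟫)^2) ((hTcont _).pow 2))]
    have h1 : ∀ z : sphere (0 : EuclideanSpace ℝ (Fin n)) 1,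
        ∑ i : Fin n, (⟪EuclideanSpace.single i (1:ℝ), (z : EuclideanSpace ℝ (Fin n))⟫)^2
          = (1:ℝ) := fun z => by rw [sum_inner_single_sq, hnormz z, one_pow]
    rw [integral_congr_ae (Filter.Eventually.of_forall h1)]
    simp
  have hex : ∃ i : Fin n, 1/(n:ℝ) ≤ ∫ z : sphere (0 : EuclideanSpace ℝ (Fin n)) 1,
      (⟪EuclideanSpace.single i (1:ℝ), (z : EuclideanSpace ℝ (Fin n))⟫)^2 ∂σ := by
    by_contra hcon
    push_neg at hcon
    have hne : (Finset.univ : Finset (Fin n)).Nonempty := ⟨⟨0, by omega⟩, Finset.mem_univ _⟩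
    have hlt := Finset.sum_lt_sum_of_nonempty hne (fun i _ => hcon i)
    rw [hsum] at hlt
    have : ∑ _i : Fin n, (1/(n:ℝ)) = 1 := by
      rw [Finset.sum_const, Finset.card_univ, Fintype.card_fin, nsmul_eq_mul]
      field_simp
    rw [this] at hlt
    exact lt_irrefl _ hlt
  obtain ⟨i, hi⟩ := hex
  obtain ⟨x, hx1, hxm1, hxm2⟩ : ∃ x : EuclideanSpace ℝ (Fin n), ‖x‖ = 1 ∧
      0 ≤ ∫ z : sphere (0 : EuclideanSpace ℝ (Fin n)) 1,
        (⟪x, (z : EuclideanSpace ℝ (Fin n))⟫ : ℝ) ∂σ ∧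
      1/(n:ℝ) ≤ ∫ z : sphere (0 : EuclideanSpace ℝ (Fin n)) 1,
        (⟪x, (z : EuclideanSpace ℝ (Fin n))⟫)^2 ∂σ := by
    rcases le_or_gt 0 (∫ z : sphere (0 : EuclideanSpace ℝ (Fin n)) 1,
        (⟪EuclideanSpace.single i (1:ℝ), (z : EuclideanSpace ℝ (Fin n))⟫ : ℝ) ∂σ) with h | h
    · exact ⟨EuclideanSpace.single i (1:ℝ), by simp [EuclideanSpace.norm_single], h, hi⟩
    · refine ⟨-EuclideanSpace.single i (1:ℝ), by simp [EuclideanSpace.norm_single], ?_, ?_⟩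
      · simp_rw [inner_neg_left]
        rw [integral_neg]
        linarith
      · simp_rw [inner_neg_left, neg_sq]
        exact hi
  obtain ⟨a, ha0, ha1, hfin⟩ := arith n hn hq0 hq1 hlam0 hlamq
  refine ⟨x, a, hx1, ha0, ?_⟩
  rw [hx1, one_pow]
  have habs : ∀ z : sphere (0 : EuclideanSpace ℝ (Fin n)) 1,
      (⟪x, (z : EuclideanSpace ℝ (Fin n))⟫ : ℝ) ∈ Set.Icc (-1:ℝ) 1 := fun z => by
    have h1 := abs_real_inner_le_norm x (z : EuclideanSpace ℝ (Fin n))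
    rw [hx1, hnormz z, one_mul] at h1
    exact Set.mem_Icc.mpr (abs_le.mp h1)
  have step1 : ∀ z : sphere (0 : EuclideanSpace ℝ (Fin n)) 1,
      ‖x - a • (z : EuclideanSpace ℝ (Fin n))‖ ^ p
        = (1 + a^2 - 2*a*(⟪x, (z : EuclideanSpace ℝ (Fin n))⟫ : ℝ))^q := fun z => by
    have hsq : ‖x - a • (z : EuclideanSpace ℝ (Fin n))‖^2
        = 1 + a^2 - 2*a*(⟪x, (z : EuclideanSpace ℝ (Fin n))⟫ : ℝ) := by
      rw [norm_sub_sq_real, real_inner_smul_right, norm_smul, hx1, hnormz z]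
      rw [Real.norm_eq_abs, abs_of_pos ha0]
      ring
    calc ‖x - a • (z : EuclideanSpace ℝ (Fin n))‖ ^ p
        = (‖x - a • (z : EuclideanSpace ℝ (Fin n))‖^(2:ℕ))^q := by
          rw [← Real.rpow_natCast ‖x - a • (z : EuclideanSpace ℝ (Fin n))‖ 2,
            ← Real.rpow_mul (norm_nonneg _)]
          congr 1
          push_cast
          rw [hqdef]; ring
      _ = _ := by rw [hsq]
  have icont : Continuous (fun z : sphere (0 : EuclideanSpace ℝ (Fin n)) 1 =>
      (1 + a^2 - 2*a*(⟪x, (z : EuclideanSpace ℝ (Fin n))⟫ : ℝ))) :=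
    continuous_const.sub (continuous_const.mul (hTcont x))
  have ic1 : Integrable (fun z : sphere (0 : EuclideanSpace ℝ (Fin n)) 1 =>
      (1 + a^2 - 2*a*(⟪x, (z : EuclideanSpace ℝ (Fin n))⟫ : ℝ))^q) σ :=
    integrable_sphereHaar _ (icont.rpow_const (fun z => Or.inr hq0.le))
  have iclin : Integrable (fun z : sphere (0 : EuclideanSpace ℝ (Fin n)) 1 =>
      (⟪x, (z : EuclideanSpace ℝ (Fin n))⟫ : ℝ)) σ := integrable_sphereHaar _ (hTcont x)
  have icsq : Integrable (fun z : sphere (0 : EuclideanSpace ℝ (Fin n)) 1 =>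
      (⟪x, (z : EuclideanSpace ℝ (Fin n))⟫ : ℝ)^2) σ := integrable_sphereHaar _ ((hTcont x).pow 2)
  have ic2 : Integrable (fun z : sphere (0 : EuclideanSpace ℝ (Fin n)) 1 =>
      (1+a^2)^q - (q*(1+a^2)^(q-1)*(2*a))*(⟪x, (z : EuclideanSpace ℝ (Fin n))⟫ : ℝ)
        - (q*(1-q)*((1+a)^2)^(q-2)*(2*a)^2/2)*(⟪x, (z : EuclideanSpace ℝ (Fin n))⟫ : ℝ)^2) σ :=
    (((integrable_const _).sub (iclin.const_mul _)).sub (icsq.const_mul _))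
  have hc3 : 0 ≤ q*(1-q)*((1+a)^2)^(q-2)*(2*a)^2/2 := by
    have h1 : (0:ℝ) ≤ ((1+a)^2)^(q-2) := Real.rpow_nonneg (by positivity) _
    have h2 : (0:ℝ) ≤ 1 - q := by linarith
    positivity
  have hc2 : 0 ≤ q*(1+a^2)^(q-1)*(2*a) := by
    have h1 : (0:ℝ) ≤ (1+a^2:ℝ)^(q-1) := Real.rpow_nonneg (by positivity) _
    positivity
  calc ∫ z : sphere (0 : EuclideanSpace ℝ (Fin n)) 1,
          ‖x - a • (z : EuclideanSpace ℝ (Fin n))‖ ^ p ∂σ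
      = ∫ z : sphere (0 : EuclideanSpace ℝ (Fin n)) 1,
          (1 + a^2 - 2*a*(⟪x, (z : EuclideanSpace ℝ (Fin n))⟫ : ℝ))^q ∂σ :=
        integral_congr_ae (Filter.Eventually.of_forall step1)
    _ ≤ ∫ z : sphere (0 : EuclideanSpace ℝ (Fin n)) 1,
          ((1+a^2)^q - (q*(1+a^2)^(q-1)*(2*a))*(⟪x, (z : EuclideanSpace ℝ (Fin n))⟫ : ℝ)
            - (q*(1-q)*((1+a)^2)^(q-2)*(2*a)^2/2)*(⟪x, (z : EuclideanSpace ℝ (Fin n))⟫ : ℝ)^2) ∂σ :=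
        integral_mono ic1 ic2 (fun z => strong_concave hq0 hq1 ha0 ha1 (habs z))
    _ = (1+a^2)^q - (q*(1+a^2)^(q-1)*(2*a)) * (∫ z : sphere (0 : EuclideanSpace ℝ (Fin n)) 1,
            (⟪x, (z : EuclideanSpace ℝ (Fin n))⟫ : ℝ) ∂σ)
          - (q*(1-q)*((1+a)^2)^(q-2)*(2*a)^2/2) * (∫ z : sphere (0 : EuclideanSpace ℝ (Fin n)) 1,
            (⟪x, (z : EuclideanSpace ℝ (Fin n))⟫ : ℝ)^2 ∂σ) := by
        have e1 : (∫ z : sphere (0 : EuclideanSpace ℝ (Fin n)) 1,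
            ((1+a^2)^q - (q*(1+a^2)^(q-1)*(2*a))*(⟪x, (z : EuclideanSpace ℝ (Fin n))⟫ : ℝ)
              - (q*(1-q)*((1+a)^2)^(q-2)*(2*a)^2/2)*(⟪x, (z : EuclideanSpace ℝ (Fin n))⟫ : ℝ)^2) ∂σ)
            = (∫ z : sphere (0 : EuclideanSpace ℝ (Fin n)) 1,
                ((1+a^2)^q - (q*(1+a^2)^(q-1)*(2*a))*(⟪x, (z : EuclideanSpace ℝ (Fin n))⟫ : ℝ)) ∂σ)
              - ∫ z : sphere (0 : EuclideanSpace ℝ (Fin n)) 1,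
                  (q*(1-q)*((1+a)^2)^(q-2)*(2*a)^2/2)*(⟪x, (z : EuclideanSpace ℝ (Fin n))⟫ : ℝ)^2 ∂σ :=
          integral_sub ((integrable_const _).sub (iclin.const_mul _)) (icsq.const_mul _)
        have e2 : (∫ z : sphere (0 : EuclideanSpace ℝ (Fin n)) 1,
            ((1+a^2)^q - (q*(1+a^2)^(q-1)*(2*a))*(⟪x, (z : EuclideanSpace ℝ (Fin n))⟫ : ℝ)) ∂σ)
            = (∫ _z : sphere (0 : EuclideanSpace ℝ (Fin n)) 1, ((1+a^2)^q : ℝ) ∂σ)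
              - ∫ z : sphere (0 : EuclideanSpace ℝ (Fin n)) 1,
                  (q*(1+a^2)^(q-1)*(2*a))*(⟪x, (z : EuclideanSpace ℝ (Fin n))⟫ : ℝ) ∂σ :=
          integral_sub (integrable_const _) (iclin.const_mul _)
        rw [e1, e2, integral_const_mul, integral_const_mul, integral_const]
        simp [measure_univ]
    _ ≤ (1+a^2)^q - (q*(1-q)*((1+a)^2)^(q-2)*(2*a)^2/2) * (1/(n:ℝ)) := by
        have h1 := mul_le_mul_of_nonneg_left hxm2 hc3
        have h2 := mul_nonneg hc2 hxm1
        linarith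
    _ < (1 + lam*a^2)^q := hfin
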